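/- arXiv:2110.15572 — 2 statements merged into one kernel-verified Lean document; each statement's English description precedes it below -/
import Mathlib

section
/- On-policy stochastic GNPG fails with positive probability: consider an on-policy process with the stochastic GNPG update θ_{t+1} := θ_t + η·g_{a_t}(θ_t)/‖g_{a_t}(θ_t)‖₂ (η > 0; these stochastic gradients are nonzero since π_{θ_t} has full support and r(a) > 0). Then for every action a ∈ [K]: P(a_t = a for all t ≥ 1) ≥ exp(−(√2·e^{η/√2}/η)·(Σ_{a' ≠ a} e^{θ_1(a')})/e^{θ_1(a)}) > 0, and on the event {a_t = a for all t ≥ 1} one has π_{θ_t}(a) → 1 as t → ∞. Hence for every a ∈ [K], with positive probability π_{θ_t}(a) → 1. -/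
open Finset Real Filter MeasureTheory

/-- Softmax policy: `π_θ(a) = exp(θ(a)) / Σ_{a'} exp(θ(a'))`. -/
noncomputable def softmax {K : ℕ} (θ : Fin K → ℝ) (a : Fin K) : ℝ :=
  Real.exp (θ a) / ∑ a', Real.exp (θ a')

/-- On-policy IS stochastic softmax policy gradient for sampled action `a`:
`g_a(θ)(i) = 1{i = a}·r(a) − π_θ(i)·r(a)`. -/
noncomputable def stochPG {K : ℕ} (r : Fin K → ℝ) (a : Fin K) (θ : Fin K → ℝ)
    (i : Fin K) : ℝ :=
  (if i = a then r a else 0) - softmax θ i * r a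

/-- Euclidean norm of the stochastic softmax policy gradient. -/
noncomputable def stochPGNorm {K : ℕ} (r : Fin K → ℝ) (a : Fin K) (θ : Fin K → ℝ) : ℝ :=
  Real.sqrt (∑ i, stochPG r a θ i ^ 2)

noncomputable def Sgap {K : ℕ} (a : Fin K) (θ : Fin K → ℝ) : ℝ :=
  ∑ i ∈ Finset.univ.filter (· ≠ a), Real.exp (θ i - θ a)

lemma univ_eq_insert {K : ℕ} (a : Fin K) :
    (Finset.univ : Finset (Fin K)) = insert a (Finset.univ.filter (· ≠ a)) := by
  ext i
  simp only [Finset.mem_univ, Finset.mem_insert, Finset.mem_filter, true_and, true_iff]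
  tauto

lemma sum_exp_pos {K : ℕ} (a : Fin K) (θ : Fin K → ℝ) : 0 < ∑ a', Real.exp (θ a') :=
  Finset.sum_pos (fun i _ => Real.exp_pos _) ⟨a, Finset.mem_univ a⟩

lemma Sgap_nonneg {K : ℕ} (a : Fin K) (θ : Fin K → ℝ) : 0 ≤ Sgap a θ :=
  Finset.sum_nonneg fun i _ => (Real.exp_pos _).le

lemma sum_exp_split {K : ℕ} (a : Fin K) (θ : Fin K → ℝ) :
    ∑ a', Real.exp (θ a') = Real.exp (θ a) * (1 + Sgap a θ) := by
  rw [univ_eq_insert a, Finset.sum_insert (by simp)]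
  unfold Sgap
  rw [mul_add, mul_one, Finset.mul_sum]
  congr 1
  refine Finset.sum_congr rfl fun i _ => ?_
  rw [← Real.exp_add]; ring_nf

lemma softmax_eq_inv {K : ℕ} (a : Fin K) (θ : Fin K → ℝ) :
    softmax θ a = 1 / (1 + Sgap a θ) := by
  have h1 : (0:ℝ) < 1 + Sgap a θ := by linarith [Sgap_nonneg a θ]
  unfold softmax
  rw [sum_exp_split a θ, div_eq_div_iff (by positivity) h1.ne']
  ring

lemma softmax_pos {K : ℕ} (θ : Fin K → ℝ) (i : Fin K) : 0 < softmax θ i :=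
  div_pos (Real.exp_pos _) (sum_exp_pos i θ)

lemma softmax_sum {K : ℕ} (a : Fin K) (θ : Fin K → ℝ) : ∑ i, softmax θ i = 1 := by
  unfold softmax
  rw [← Finset.sum_div, div_self (sum_exp_pos a θ).ne']

lemma one_sub_softmax {K : ℕ} (a : Fin K) (θ : Fin K → ℝ) :
    1 - softmax θ a = ∑ i ∈ Finset.univ.filter (· ≠ a), softmax θ i := by
  have h := softmax_sum a θ
  rw [univ_eq_insert a, Finset.sum_insert (by simp)] at h
  linarith

lemma one_sub_softmax_pos {K : ℕ} (hK : 2 ≤ K) (a : Fin K) (θ : Fin K → ℝ) :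
    0 < 1 - softmax θ a := by
  obtain ⟨b, hb⟩ := Fintype.exists_ne_of_one_lt_card (by simp; omega) a
  rw [one_sub_softmax a θ]
  exact Finset.sum_pos (fun i _ => softmax_pos θ i) ⟨b, by simpa using hb⟩

lemma stochPG_sq_sum_le {K : ℕ} (a : Fin K) (r θ : Fin K → ℝ) :
    ∑ i, stochPG r a θ i ^ 2 ≤ 2 * (r a * (1 - softmax θ a)) ^ 2 := by
  rw [univ_eq_insert a, Finset.sum_insert (by simp)]
  have h1 : stochPG r a θ a ^ 2 = (r a * (1 - softmax θ a)) ^ 2 := by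
    unfold stochPG; simp; ring
  have h2 : ∑ i ∈ Finset.univ.filter (· ≠ a), stochPG r a θ i ^ 2
      ≤ (r a * (1 - softmax θ a)) ^ 2 := by
    have h3 : ∀ i ∈ Finset.univ.filter (· ≠ a), stochPG r a θ i ^ 2
        = (softmax θ i * |r a|) ^ 2 := by
      intro i hi
      simp only [Finset.mem_filter] at hi
      unfold stochPG
      rw [if_neg hi.2]
      rw [show (0 - softmax θ i * r a) ^ 2 = (softmax θ i * r a) ^2 by ring]
      rw [mul_pow, mul_pow, sq_abs]
    rw [Finset.sum_congr rfl h3]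
    calc ∑ i ∈ Finset.univ.filter (· ≠ a), (softmax θ i * |r a|) ^ 2
        ≤ (∑ i ∈ Finset.univ.filter (· ≠ a), softmax θ i * |r a|) ^ 2 :=
          Finset.sum_sq_le_sq_sum_of_nonneg fun i _ =>
            mul_nonneg (softmax_pos θ i).le (abs_nonneg _)
      _ = (r a * (1 - softmax θ a)) ^ 2 := by
          rw [← Finset.sum_mul, ← one_sub_softmax a θ]
          rw [show (1 - softmax θ a) * |r a| = |r a| * (1 - softmax θ a) by ring]
          rw [mul_pow, mul_pow, sq_abs]
  linarith

lemma stochPGNorm_le {K : ℕ} (hK : 2 ≤ K) (a : Fin K) (r θ : Fin K → ℝ) (hra : 0 ≤ r a) :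
    stochPGNorm r a θ ≤ Real.sqrt 2 * (r a * (1 - softmax θ a)) := by
  unfold stochPGNorm
  have h := one_sub_softmax_pos hK a θ
  calc Real.sqrt (∑ i, stochPG r a θ i ^ 2)
      ≤ Real.sqrt (2 * (r a * (1 - softmax θ a)) ^ 2) :=
        Real.sqrt_le_sqrt (stochPG_sq_sum_le a r θ)
    _ = Real.sqrt 2 * (r a * (1 - softmax θ a)) := by
        rw [Real.sqrt_mul (by norm_num), Real.sqrt_sq (by positivity)]

lemma stochPG_self {K : ℕ} (a : Fin K) (r θ : Fin K → ℝ) :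
    stochPG r a θ a = r a * (1 - softmax θ a) := by
  unfold stochPG; rw [if_pos rfl]; ring

lemma stochPGNorm_pos {K : ℕ} (hK : 2 ≤ K) (a : Fin K) (r θ : Fin K → ℝ) (hra : 0 < r a) :
    0 < stochPGNorm r a θ := by
  unfold stochPGNorm
  apply Real.sqrt_pos.mpr
  have h0 := one_sub_softmax_pos hK a θ
  have h1 : 0 < stochPG r a θ a ^ 2 := by rw [stochPG_self]; positivity
  calc (0:ℝ) < stochPG r a θ a ^ 2 := h1
    _ ≤ ∑ i, stochPG r a θ i ^ 2 :=
        Finset.single_le_sum (f := fun i => stochPG r a θ i ^ 2)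
          (fun i _ => sq_nonneg _) (Finset.mem_univ a)

lemma Sgap_step {K : ℕ} (hK : 2 ≤ K) (a : Fin K) (r θ : Fin K → ℝ) (hra : 0 < r a)
    (η : ℝ) (hη : 0 < η) :
    Sgap a (fun i => θ i + η * (stochPG r a θ i / stochPGNorm r a θ))
      ≤ Sgap a θ * Real.exp (-(η / Real.sqrt 2)) := by
  set N := stochPGNorm r a θ with hN
  have hNpos : 0 < N := stochPGNorm_pos hK a r θ hra
  have hq : 0 < 1 - softmax θ a := one_sub_softmax_pos hK a θ
  have hNle : N ≤ Real.sqrt 2 * (r a * (1 - softmax θ a)) := stochPGNorm_le hK a r θ hra.le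
  have hs2 : (0:ℝ) < Real.sqrt 2 := by positivity
  have key : ∀ i, i ≠ a →
      η * (stochPG r a θ i / N) - η * (stochPG r a θ a / N) ≤ -(η / Real.sqrt 2) := by
    intro i hi
    have hgi : stochPG r a θ i = -(softmax θ i * r a) := by
      unfold stochPG; rw [if_neg hi]; ring
    have hga : stochPG r a θ a = r a * (1 - softmax θ a) := stochPG_self a r θ
    have hpi : 0 < softmax θ i := softmax_pos θ i
    have hdiff : stochPG r a θ i - stochPG r a θ a ≤ -(r a * (1 - softmax θ a)) := by
      rw [hgi, hga]; nlinarith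
    have hfrac : 1 / Real.sqrt 2 ≤ r a * (1 - softmax θ a) / N := by
      rw [le_div_iff₀ hNpos, div_mul_eq_mul_div, div_le_iff₀ hs2]
      calc 1 * N = N := one_mul N
        _ ≤ Real.sqrt 2 * (r a * (1 - softmax θ a)) := hNle
        _ = r a * (1 - softmax θ a) * Real.sqrt 2 := mul_comm _ _
    calc η * (stochPG r a θ i / N) - η * (stochPG r a θ a / N)
        = η * ((stochPG r a θ i - stochPG r a θ a) / N) := by ring
      _ ≤ η * (-(r a * (1 - softmax θ a)) / N) := by
          apply mul_le_mul_of_nonneg_left _ hη.le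
          gcongr
      _ = -(η * (r a * (1 - softmax θ a) / N)) := by ring
      _ ≤ -(η / Real.sqrt 2) := by
          rw [neg_le_neg_iff]
          rw [div_eq_mul_one_div η (Real.sqrt 2)]
          exact mul_le_mul_of_nonneg_left hfrac hη.le
  unfold Sgap
  rw [Finset.sum_mul]
  apply Finset.sum_le_sum
  intro i hi
  simp only [Finset.mem_filter] at hi
  have h1 : (θ i + η * (stochPG r a θ i / N)) - (θ a + η * (stochPG r a θ a / N))
      = (θ i - θ a) + (η * (stochPG r a θ i / N) - η * (stochPG r a θ a / N)) := by ring
  rw [h1, Real.exp_add]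
  exact mul_le_mul_of_nonneg_left (Real.exp_le_exp.mpr (key i hi.2)) (Real.exp_pos _).le

/-- Deterministic parameter sequence when action `a` is sampled forever. -/
noncomputable def detSeq {K : ℕ} (r : Fin K → ℝ) (a : Fin K) (η : ℝ)
    (θinit : Fin K → ℝ) : ℕ → Fin K → ℝ
  | 0 => θinit
  | (t + 1) => fun i => detSeq r a η θinit t i +
      η * (stochPG r a (detSeq r a η θinit t) i / stochPGNorm r a (detSeq r a η θinit t))

lemma Sgap_detSeq_le {K : ℕ} (hK : 2 ≤ K) (a : Fin K) (r θinit : Fin K → ℝ)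
    (hra : 0 < r a) (η : ℝ) (hη : 0 < η) (t : ℕ) :
    Sgap a (detSeq r a η θinit t) ≤ Sgap a θinit * Real.exp (-(η / Real.sqrt 2)) ^ t := by
  induction t with
  | zero => simp [detSeq]
  | succ t ih =>
    calc Sgap a (detSeq r a η θinit (t + 1))
        ≤ Sgap a (detSeq r a η θinit t) * Real.exp (-(η / Real.sqrt 2)) :=
          Sgap_step hK a r (detSeq r a η θinit t) hra η hη
      _ ≤ Sgap a θinit * Real.exp (-(η / Real.sqrt 2)) ^ t * Real.exp (-(η / Real.sqrt 2)) :=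
          mul_le_mul_of_nonneg_right ih (Real.exp_pos _).le
      _ = Sgap a θinit * Real.exp (-(η / Real.sqrt 2)) ^ (t + 1) := by ring

lemma softmax_ge_exp_neg_Sgap {K : ℕ} (a : Fin K) (θ : Fin K → ℝ) :
    Real.exp (-(Sgap a θ)) ≤ softmax θ a := by
  rw [softmax_eq_inv, Real.exp_neg, inv_eq_one_div]
  have h1 : (0:ℝ) < 1 + Sgap a θ := by linarith [Sgap_nonneg a θ]
  rw [div_le_div_iff₀ (Real.exp_pos _) h1, one_mul, one_mul]
  calc 1 + Sgap a θ = Sgap a θ + 1 := by ring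
    _ ≤ Real.exp (Sgap a θ) := Real.add_one_le_exp _

lemma geom_sum_le_one_div {c : ℝ} (hc0 : 0 ≤ c) (hc1 : c < 1) (T : ℕ) :
    ∑ t ∈ Finset.range T, c ^ t ≤ 1 / (1 - c) := by
  rw [geom_sum_eq hc1.ne T]
  rw [show (c ^ T - 1) / (c - 1) = (1 - c ^ T) / (1 - c) by
    rw [div_eq_div_iff (by linarith) (by linarith)]; ring]
  have hT : 0 ≤ c ^ T := pow_nonneg hc0 T
  gcongr
  · linarith

lemma sum_Sgap_le {K : ℕ} (hK : 2 ≤ K) (a : Fin K) (r θinit : Fin K → ℝ)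
    (hra : 0 < r a) (η : ℝ) (hη : 0 < η) (T : ℕ) :
    ∑ t ∈ Finset.range T, Sgap a (detSeq r a η θinit t)
      ≤ (Real.sqrt 2 * Real.exp (η / Real.sqrt 2) / η) * Sgap a θinit := by
  set c := Real.exp (-(η / Real.sqrt 2)) with hc
  have hs2 : (0:ℝ) < Real.sqrt 2 := by positivity
  have hx : 0 < η / Real.sqrt 2 := by positivity
  have hc0 : 0 < c := Real.exp_pos _
  have hc1 : c < 1 := by
    rw [hc, Real.exp_lt_one_iff]; linarith
  have h1 : ∑ t ∈ Finset.range T, Sgap a (detSeq r a η θinit t)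
      ≤ Sgap a θinit * (1 / (1 - c)) := by
    calc ∑ t ∈ Finset.range T, Sgap a (detSeq r a η θinit t)
        ≤ ∑ t ∈ Finset.range T, Sgap a θinit * c ^ t :=
          Finset.sum_le_sum fun t _ => Sgap_detSeq_le hK a r θinit hra η hη t
      _ = Sgap a θinit * ∑ t ∈ Finset.range T, c ^ t := by rw [Finset.mul_sum]
      _ ≤ Sgap a θinit * (1 / (1 - c)) :=
          mul_le_mul_of_nonneg_left (geom_sum_le_one_div hc0.le hc1 T) (Sgap_nonneg a θinit)
  refine h1.trans ?_
  rw [mul_comm (Real.sqrt 2 * Real.exp (η / Real.sqrt 2) / η) (Sgap a θinit)]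
  apply mul_le_mul_of_nonneg_left ?_ (Sgap_nonneg a θinit)
  -- 1/(1-c) ≤ √2 * e^x / η  where x = η/√2, c = e^{-x}
  have key : (η / Real.sqrt 2) * c ≤ 1 - c := by
    have := Real.add_one_le_exp (η / Real.sqrt 2)
    have hmul : ((η / Real.sqrt 2) + 1) * c ≤ Real.exp (η / Real.sqrt 2) * c :=
      mul_le_mul_of_nonneg_right this hc0.le
    rw [hc, ← Real.exp_add] at hmul
    simp only [add_neg_cancel, Real.exp_zero] at hmul
    nlinarith
  have h1c : 0 < 1 - c := by linarith
  rw [div_le_div_iff₀ h1c (by positivity : (0:ℝ) < η)]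
  have hmain : η ≤ Real.sqrt 2 * Real.exp (η / Real.sqrt 2) * (η / Real.sqrt 2 * c) := by
    rw [show Real.sqrt 2 * (Real.exp (η / Real.sqrt 2)) * (η / Real.sqrt 2 *
      Real.exp (-(η / Real.sqrt 2))) = (Real.sqrt 2 * (η / Real.sqrt 2)) *
        (Real.exp (η / Real.sqrt 2) * Real.exp (-(η / Real.sqrt 2))) by ring]
    rw [← Real.exp_add]
    simp only [add_neg_cancel, Real.exp_zero, mul_one]
    rw [mul_div_cancel₀ η hs2.ne']
  calc 1 * η = η := one_mul η
    _ ≤ Real.sqrt 2 * Real.exp (η / Real.sqrt 2) * (η / Real.sqrt 2 * c) := hmain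
    _ ≤ Real.sqrt 2 * Real.exp (η / Real.sqrt 2) * (1 - c) :=
        mul_le_mul_of_nonneg_left key (by positivity)

lemma prod_softmax_ge {K : ℕ} (hK : 2 ≤ K) (a : Fin K) (r θinit : Fin K → ℝ)
    (hra : 0 < r a) (η : ℝ) (hη : 0 < η) (T : ℕ) :
    Real.exp (-(Real.sqrt 2 * Real.exp (η / Real.sqrt 2) / η) * Sgap a θinit)
      ≤ ∏ t ∈ Finset.range T, softmax (detSeq r a η θinit t) a := by
  calc Real.exp (-(Real.sqrt 2 * Real.exp (η / Real.sqrt 2) / η) * Sgap a θinit)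
      ≤ Real.exp (-(∑ t ∈ Finset.range T, Sgap a (detSeq r a η θinit t))) := by
        apply Real.exp_le_exp.mpr
        rw [neg_mul]
        exact neg_le_neg (sum_Sgap_le hK a r θinit hra η hη T)
    _ = ∏ t ∈ Finset.range T, Real.exp (-(Sgap a (detSeq r a η θinit t))) := by
        rw [← Real.exp_sum, Finset.sum_neg_distrib]
    _ ≤ ∏ t ∈ Finset.range T, softmax (detSeq r a η θinit t) a :=
        Finset.prod_le_prod (fun t _ => (Real.exp_pos _).le)
          (fun t _ => softmax_ge_exp_neg_Sgap a _)

lemma tendsto_softmax_detSeq {K : ℕ} (hK : 2 ≤ K) (a : Fin K) (r θinit : Fin K → ℝ)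
    (hra : 0 < r a) (η : ℝ) (hη : 0 < η) :
    Filter.Tendsto (fun t => softmax (detSeq r a η θinit t) a) Filter.atTop (nhds 1) := by
  set c := Real.exp (-(η / Real.sqrt 2)) with hc
  have hc0 : 0 < c := Real.exp_pos _
  have hc1 : c < 1 := by
    rw [hc, Real.exp_lt_one_iff]
    have : (0:ℝ) < η / Real.sqrt 2 := by positivity
    linarith
  have hgeo : Filter.Tendsto (fun t : ℕ => Sgap a θinit * c ^ t) Filter.atTop (nhds 0) := by
    have := tendsto_pow_atTop_nhds_zero_of_lt_one hc0.le hc1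
    simpa using this.const_mul (Sgap a θinit)
  have hS : Filter.Tendsto (fun t => Sgap a (detSeq r a η θinit t)) Filter.atTop (nhds 0) := by
    apply tendsto_of_tendsto_of_tendsto_of_le_of_le tendsto_const_nhds hgeo
    · exact fun t => Sgap_nonneg a _
    · exact fun t => Sgap_detSeq_le hK a r θinit hra η hη t
  have h1 : Filter.Tendsto (fun t => (1:ℝ) / (1 + Sgap a (detSeq r a η θinit t)))
      Filter.atTop (nhds ((1:ℝ) / (1 + 0))) :=
    Filter.Tendsto.div tendsto_const_nhds (tendsto_const_nhds.add hS) (by norm_num)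
  rw [show (1:ℝ) / (1 + 0) = 1 by norm_num] at h1
  exact h1.congr fun t => (softmax_eq_inv a _).symm

/-- On-policy stochastic GNPG fails with positive probability: for every action `a`,
with the update `θ_{t+1} = θ_t + η·g_{a_t}(θ_t)/‖g_{a_t}(θ_t)‖₂`, the probability of
sampling `a` forever is at least
`exp(−(√2·e^{η/√2}/η)·(Σ_{a'≠a} e^{θ_1(a')})/e^{θ_1(a)}) > 0`, and on that event
`π_{θ_t}(a) → 1`. (Here `θ 0` is the paper's `θ_1` and `act t` the paper's `a_{t+1}`.) -/
theorem stochastic_gnpg_fails_with_positive_probability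
    {K : ℕ} (hK : 2 ≤ K) (r : Fin K → ℝ)
    (hr : ∀ a, 0 < r a ∧ r a ≤ 1)
    (astar : Fin K) (hstar : ∀ a, a ≠ astar → r a < r astar)
    (η : ℝ) (hη : 0 < η)
    {Ω : Type*} {mΩ : MeasurableSpace Ω} (P : Measure Ω) [IsProbabilityMeasure P]
    (F : Filtration ℕ mΩ)
    (act : ℕ → Ω → Fin K) (θ : ℕ → Ω → Fin K → ℝ)
    (θinit : Fin K → ℝ) (hθ0 : ∀ ω, θ 0 ω = θinit)
    (hθmeas : ∀ t, Measurable[F t] (θ t))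
    (hactmeas : ∀ t, Measurable[F (t + 1)] (act t))
    (hcond : ∀ t b, P[(fun ω => if act t ω = b then (1 : ℝ) else 0)|F t]
      =ᵐ[P] fun ω => softmax (θ t ω) b)
    (hupd : ∀ t ω, θ (t + 1) ω = fun i =>
      θ t ω i + η * (stochPG r (act t ω) (θ t ω) i / stochPGNorm r (act t ω) (θ t ω))) :
    ∀ a : Fin K,
      ENNReal.ofReal
          (Real.exp (-(Real.sqrt 2 * Real.exp (η / Real.sqrt 2) / η) *
            ((∑ a' ∈ Finset.univ.filter (fun a' => a' ≠ a), Real.exp (θinit a')) /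
              Real.exp (θinit a)))) ≤
        P {ω | ∀ t, act t ω = a} ∧
      0 < P {ω | ∀ t, act t ω = a} ∧
      ∀ ω, (∀ t, act t ω = a) →
        Tendsto (fun t => softmax (θ t ω) a) atTop (nhds 1) := by
  intro a
  have hra : 0 < r a := (hr a).1
  set Θ := detSeq r a η θinit with hΘ
  have hSinit : (∑ a' ∈ Finset.univ.filter (fun a' => a' ≠ a), Real.exp (θinit a')) /
      Real.exp (θinit a) = Sgap a θinit := by
    unfold Sgap
    rw [Finset.sum_div]
    exact Finset.sum_congr rfl fun i _ => (Real.exp_sub _ _).symm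
  rw [hSinit]
  set B := Real.exp (-(Real.sqrt 2 * Real.exp (η / Real.sqrt 2) / η) * Sgap a θinit) with hB
  -- events
  set E : ℕ → Set Ω := fun T => {ω | ∀ t < T, act t ω = a} with hE
  have hEmeasF : ∀ T, MeasurableSet[F T] (E T) := by
    intro T
    have hrw : E T = ⋂ (t : ℕ) (_ : t < T), act t ⁻¹' {a} := by
      ext ω; simp [hE, Set.mem_iInter]
    rw [hrw]
    exact MeasurableSet.iInter fun t => MeasurableSet.iInter fun ht =>
      F.mono ht _ (hactmeas t (measurableSet_singleton a))
  have hEmeas : ∀ T, MeasurableSet (E T) := fun T => F.le T _ (hEmeasF T)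
  have hθE : ∀ T, ∀ ω ∈ E T, θ T ω = Θ T := by
    intro T
    induction T with
    | zero => intro ω _; rw [hθ0]; rfl
    | succ T ih =>
      intro ω hω
      have hωT : ω ∈ E T := fun t ht => hω t (ht.trans (Nat.lt_succ_self T))
      have hact : act T ω = a := hω T (Nat.lt_succ_self T)
      rw [hupd T ω, ih ω hωT, hact]
      rfl
  -- probability recursion
  have hPE : ∀ T, (P (E T)).toReal = ∏ t ∈ Finset.range T, softmax (Θ t) a := by
    intro T
    induction T with
    | zero =>
      have h0 : E 0 = Set.univ := by ext ω; simp [hE]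
      simp [h0]
    | succ T ih =>
      have hsplit : E (T + 1) = E T ∩ act T ⁻¹' {a} := by
        ext ω
        simp only [hE, Set.mem_setOf_eq, Set.mem_inter_iff, Set.mem_preimage,
          Set.mem_singleton_iff]
        constructor
        · intro h
          exact ⟨fun t ht => h t (ht.trans (Nat.lt_succ_self T)), h T (Nat.lt_succ_self T)⟩
        · intro h t ht
          rcases Nat.lt_succ_iff_lt_or_eq.mp ht with h' | h'
          · exact h.1 t h'
          · rw [h']; exact h.2
      have hAmeas : MeasurableSet (act T ⁻¹' {a}) :=
        F.le (T + 1) _ (hactmeas T (measurableSet_singleton a))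
      have hf : (fun ω => if act T ω = a then (1:ℝ) else 0)
          = (act T ⁻¹' {a}).indicator (fun _ => (1:ℝ)) := by
        funext ω
        by_cases h : act T ω = a <;> simp [Set.indicator, h]
      have hint : Integrable (fun ω => if act T ω = a then (1:ℝ) else 0) P := by
        rw [hf]; exact (integrable_const 1).indicator hAmeas
      have step1 : ∫ ω in E T, (if act T ω = a then (1:ℝ) else 0) ∂P
          = (P (E (T + 1))).toReal := by
        rw [show (fun ω => if act T ω = a then (1:ℝ) else 0)
            = (act T ⁻¹' {a}).indicator (fun _ => (1:ℝ)) from hf]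
        rw [setIntegral_indicator hAmeas, setIntegral_const, hsplit]
        simp
        rfl
      have step2 : ∫ ω in E T, (P[(fun ω => if act T ω = a then (1:ℝ) else 0)|F T]) ω ∂P
          = ∫ ω in E T, (if act T ω = a then (1:ℝ) else 0) ∂P :=
        setIntegral_condExp (F.le T) hint (hEmeasF T)
      have step3 : ∫ ω in E T, (P[(fun ω => if act T ω = a then (1:ℝ) else 0)|F T]) ω ∂P
          = ∫ ω in E T, softmax (θ T ω) a ∂P :=
        setIntegral_congr_ae (hEmeas T) ((hcond T a).mono fun ω h _ => h)
      have step4 : ∫ ω in E T, softmax (θ T ω) a ∂P = ∫ ω in E T, softmax (Θ T) a ∂P :=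
        setIntegral_congr_fun (hEmeas T) (fun ω hω => by rw [hθE T ω hω])
      have step5 : ∫ ω in E T, softmax (Θ T) a ∂P = (P (E T)).toReal * softmax (Θ T) a := by
        rw [setIntegral_const, smul_eq_mul]
        rfl
      rw [Finset.prod_range_succ, ← ih, ← step1, ← step2, step3, step4, step5]
  -- lower bound for each T
  have hlow : ∀ T, ENNReal.ofReal B ≤ P (E T) := by
    intro T
    have h1 : B ≤ (P (E T)).toReal := by
      rw [hPE T, hB]
      exact prod_softmax_ge hK a r θinit hra η hη T
    calc ENNReal.ofReal B ≤ ENNReal.ofReal (P (E T)).toReal := ENNReal.ofReal_le_ofReal h1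
      _ = P (E T) := ENNReal.ofReal_toReal (measure_ne_top P _)
  have hset : {ω | ∀ t, act t ω = a} = ⋂ T, E T := by
    ext ω
    simp only [Set.mem_setOf_eq, Set.mem_iInter, hE]
    exact ⟨fun h T t _ => h t, fun h t => h (t + 1) t (Nat.lt_succ_self t)⟩
  have hanti : Antitone E := fun T T' hTT' ω hω t ht => hω t (lt_of_lt_of_le ht hTT')
  have htend := tendsto_measure_iInter_atTop (μ := P) (s := E)
    (fun T => (hEmeas T).nullMeasurableSet) hanti ⟨0, measure_ne_top P _⟩
  have hmain : ENNReal.ofReal B ≤ P {ω | ∀ t, act t ω = a} := by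
    rw [hset]
    exact ge_of_tendsto' htend hlow
  refine ⟨hmain, lt_of_lt_of_le (ENNReal.ofReal_pos.mpr (Real.exp_pos _)) hmain, ?_⟩
  intro ω hω
  have hθω : ∀ t, θ t ω = Θ t := fun t => hθE t ω (fun s _ => hω s)
  exact (tendsto_softmax_detSeq hK a r θinit hra η hη).congr fun t => by rw [hθω t]
end

section
/- Monotone improvement of NPG with an oracle baseline: fix η > 0 and a baseline b with r(a*) − Δ < b < r(a*). For any parameter θ ∈ ℝ^K and any sampled action â ∈ [K], the oracle-baseline NPG update produces θ' ∈ ℝ^K with θ'(â) := θ(â) + (η/π_θ(â))·(r(â) − b) and θ'(a') := θ(a') for all a' ≠ â. Then π_{θ'}(a*) > π_θ(a*) for every choice of sampled action â (whether â = a* or â ≠ a*). Consequently, along any sequence of sampled actions, π_{θ_t}(a*) is strictly increasing in t. -/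
open Finset Real Filter

lemma sum_exp_update {K : ℕ} [NeZero K] (θ : Fin K → ℝ) (ahat : Fin K) (v : ℝ) :
    ∑ a, Real.exp (if a = ahat then v else θ a)
      = Real.exp v + ∑ a ∈ Finset.univ.erase ahat, Real.exp (θ a) := by
  rw [← Finset.add_sum_erase _ _ (Finset.mem_univ ahat), if_pos rfl]
  congr 1
  refine Finset.sum_congr rfl fun a ha => ?_
  rw [if_neg (Finset.mem_erase.mp ha).1]

/-- Monotone improvement of NPG with an oracle baseline: with `η > 0` and a baseline
`b ∈ (r(a*) − Δ, r(a*))`, the oracle-baseline NPG update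
`θ'(â) = θ(â) + (η/π_θ(â))·(r(â) − b)`, `θ'(a') = θ(a')` for `a' ≠ â`
strictly increases the optimal action's probability for every sampled action `â`;
consequently along any sequence of sampled actions, `π_{θ_t}(a*)` is strictly
increasing in `t`. -/
theorem npg_oracle_baseline_monotone
    {K : ℕ} (hK : 2 ≤ K) (r : Fin K → ℝ)
    (hr : ∀ a, 0 < r a ∧ r a ≤ 1)
    (astar : Fin K) (hstar : ∀ a, a ≠ astar → r a < r astar)
    (Δ : ℝ) (hΔ : Δ = r astar - sSup (r '' {a | a ≠ astar}))
    (η b : ℝ) (hη : 0 < η) (hb1 : r astar - Δ < b) (hb2 : b < r astar) :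
    (∀ (θ : Fin K → ℝ) (ahat : Fin K),
      softmax θ astar <
        softmax
          (fun a' => if a' = ahat then θ ahat + η / softmax θ ahat * (r ahat - b) else θ a')
          astar) ∧
    ∀ (act : ℕ → Fin K) (θ : ℕ → Fin K → ℝ),
      (∀ t, θ (t + 1) = fun a' =>
        if a' = act t then θ t (act t) + η / softmax (θ t) (act t) * (r (act t) - b)
        else θ t a') →
      ∀ t, softmax (θ t) astar < softmax (θ (t + 1)) astar := by
  have hKpos : 0 < K := by omega
  haveI : NeZero K := ⟨by omega⟩
  haveI : Nonempty (Fin K) := Fin.pos_iff_nonempty.mp hKpos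
  -- any suboptimal reward is ≤ r astar - Δ
  have hsub : ∀ a, a ≠ astar → r a ≤ r astar - Δ := by
    intro a ha
    rw [hΔ]
    have hbdd : BddAbove (r '' {a | a ≠ astar}) :=
      (Set.toFinite _).image r |>.bddAbove
    have := le_csSup hbdd ⟨a, ha, rfl⟩
    linarith
  have key : ∀ (θ : Fin K → ℝ) (ahat : Fin K),
      softmax θ astar <
        softmax
          (fun a' => if a' = ahat then θ ahat + η / softmax θ ahat * (r ahat - b) else θ a')
          astar := by
    intro θ ahat
    have hSpos : 0 < ∑ a', Real.exp (θ a') :=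
      Finset.sum_pos (fun _ _ => Real.exp_pos _) Finset.univ_nonempty
    have hsm : 0 < softmax θ ahat := div_pos (Real.exp_pos _) hSpos
    set v : ℝ := θ ahat + η / softmax θ ahat * (r ahat - b) with hv
    have hS : ∑ a, Real.exp (θ a)
        = Real.exp (θ ahat) + ∑ a ∈ Finset.univ.erase ahat, Real.exp (θ a) := by
      rw [← Finset.add_sum_erase _ _ (Finset.mem_univ ahat)]
    have hS' := sum_exp_update θ ahat v
    set T : ℝ := ∑ a ∈ Finset.univ.erase ahat, Real.exp (θ a) with hT
    have hTnonneg : 0 ≤ T := Finset.sum_nonneg fun _ _ => (Real.exp_pos _).le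
    by_cases hcase : ahat = astar
    · -- sampled optimal action: v > θ ahat
      subst hcase
      have hvgt : θ ahat < v :=
        lt_add_of_pos_right _ (mul_pos (div_pos hη hsm) (by linarith))
      have hTpos : 0 < T := by
        have hne : (Finset.univ.erase ahat).Nonempty := by
          rw [← Finset.card_pos, Finset.card_erase_of_mem (Finset.mem_univ _),
            Finset.card_univ, Fintype.card_fin]
          omega
        exact Finset.sum_pos (fun _ _ => Real.exp_pos _) hne
      unfold softmax
      simp only [hS, hS', eq_self_iff_true, if_true]
      have hx := Real.exp_pos (θ ahat)
      have hx' := Real.exp_pos v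
      have hexp := Real.exp_lt_exp.mpr hvgt
      rw [div_lt_div_iff₀ (by linarith) (by linarith)]
      nlinarith
    · -- suboptimal sampled action: v < θ ahat
      have hrb : r ahat - b < 0 := by
        have := hsub ahat hcase
        linarith
      have hvlt : v < θ ahat :=
        add_lt_of_neg_right _ (mul_neg_of_pos_of_neg (div_pos hη hsm) hrb)
      unfold softmax
      simp only [hS, hS', if_neg (show ¬ astar = ahat from fun h => hcase h.symm)]
      have hexp := Real.exp_lt_exp.mpr hvlt
      have hx := Real.exp_pos (θ astar)
      have hx' := Real.exp_pos v
      have hxa := Real.exp_pos (θ ahat)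
      exact div_lt_div_of_pos_left hx (by linarith) (by linarith)
  refine ⟨key, fun act θ hrec t => ?_⟩
  rw [hrec t]
  exact key (θ t) (act t)
end
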